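/- Let M and N be right A-modules in C, and suppose the equalizer E of the pair of morphisms δ'_N ⊗ id_{M^*} and id_N ⊗ δ_M : N ⊗ M^* ⟶ N ⊗ A^* ⊗ M^* exists, with equalizer inclusion e : E ⟶ N ⊗ M^* (associators inserted as needed). Then for every object X of C there is a bijection, natural in X, between Hom_C(X, E) and the set of right A-module morphisms X ⊗ M ⟶ N; explicitly, a morphism f : X ⊗ M ⟶ N is a morphism of right A-modules if and only if its adjunct X ⟶ N ⊗ M^* (under the duality adjunction Hom_C(X ⊗ M, N) ≅ Hom_C(X, N ⊗ M^*)) equalizes the above pair, i.e. factors through e. -/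

import Mathlib

/-!
Let `C` be a rigid monoidal category and `A` an algebra (monoid object) in `C`.
For right `A`-modules `M`, `N`, consider `δ_M : Mᘁ ⟶ Aᘁ ⊗ Mᘁ` (the transpose of the
action, composed with the canonical isomorphism `(M ⊗ A)ᘁ ≅ Aᘁ ⊗ Mᘁ`) and
`δ'_N = (act_N ⊗ id) ∘ (id_N ⊗ coev_A) : N ⟶ N ⊗ Aᘁ`.  If the equalizer `E` of
`δ'_N ⊗ id` and `id ⊗ δ_M : N ⊗ Mᘁ ⟶ N ⊗ (Aᘁ ⊗ Mᘁ)` exists, with inclusion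
`e : E ⟶ N ⊗ Mᘁ`, then for every `X` the set `Hom(X, E)` is in bijection, naturally
in `X`, with the set of right `A`-module morphisms `X ⊗ M ⟶ N`; explicitly,
`f : X ⊗ M ⟶ N` is a module morphism iff its adjunct `X ⟶ N ⊗ Mᘁ` equalizes the
pair, i.e. factors through `e`.

(Mathlib's right dual `Xᘁ`, with `ε_ X Xᘁ : Xᘁ ⊗ X ⟶ 𝟙` and `η_ X Xᘁ : 𝟙 ⟶ X ⊗ Xᘁ`,
plays the role of the left dual `X^*` of the paper.)
-/

open CategoryTheory MonoidalCategory CategoryTheory.Limits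

variable {C : Type*} [Category C] [MonoidalCategory C]

/-- A right module over a monoid object `A` in `C`. -/
structure RightMod (A : Mon C) where
  X : C
  act : X ⊗ A.X ⟶ X
  assoc : (act ▷ A.X) ≫ act = (α_ X A.X A.X).hom ≫ (X ◁ MonObj.mul (X := A.X)) ≫ act
  unit : (X ◁ MonObj.one (X := A.X)) ≫ act = (ρ_ X).hom

/-- `f : X ⊗ M ⟶ N` is a morphism of right `A`-modules, where `X ⊗ M` carries the
right `A`-module structure `(α) ≫ (X ◁ act_M)`. -/
def IsModuleMorphismFrom {A : Mon C} (X : C) (M N : RightMod A)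
    (f : X ⊗ M.X ⟶ N.X) : Prop :=
  (f ▷ A.X) ≫ N.act = (α_ X M.X A.X).hom ≫ (X ◁ M.act) ≫ f

section

variable {A : Mon C} [RigidCategory C]

/-- `δ_M : Mᘁ ⟶ Aᘁ ⊗ Mᘁ`, the transpose of the right action of `A` on `M`,
composed with the canonical isomorphism `(M ⊗ A)ᘁ ≅ Aᘁ ⊗ Mᘁ`, written out as an
explicit composite. -/
noncomputable def deltaDual (M : RightMod A) : (M.X)ᘁ ⟶ A.Xᘁ ⊗ M.Xᘁ :=
  (ρ_ (M.Xᘁ)).inv ≫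
    (M.Xᘁ ◁ (η_ M.X (M.Xᘁ) ≫
      (M.X ◁ ((λ_ (M.Xᘁ)).inv ≫ (η_ A.X (A.Xᘁ) ▷ M.Xᘁ) ≫ (α_ A.X (A.Xᘁ) (M.Xᘁ)).hom)) ≫
      (α_ M.X A.X (A.Xᘁ ⊗ M.Xᘁ)).inv)) ≫
    (M.Xᘁ ◁ (M.act ▷ (A.Xᘁ ⊗ M.Xᘁ))) ≫
    (α_ (M.Xᘁ) M.X (A.Xᘁ ⊗ M.Xᘁ)).inv ≫
    (ε_ M.X (M.Xᘁ) ▷ (A.Xᘁ ⊗ M.Xᘁ)) ≫ (λ_ (A.Xᘁ ⊗ M.Xᘁ)).hom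

/-- `δ'_N = (act_N ⊗ id_{Aᘁ}) ∘ (id_N ⊗ coev_A) : N ⟶ N ⊗ Aᘁ`. -/
noncomputable def deltaAct (N : RightMod A) : N.X ⟶ N.X ⊗ A.Xᘁ :=
  (ρ_ N.X).inv ≫ (N.X ◁ η_ A.X (A.Xᘁ)) ≫ (α_ N.X A.X (A.Xᘁ)).inv ≫ (N.act ▷ A.Xᘁ)

omit [RigidCategory C] in
private lemma gen' {Mo D U V : C} [ExactPairing Mo D] (c : 𝟙_ C ⟶ U ⊗ V) (g : U ⟶ Mo) :
    η_ Mo D ≫ (Mo ◁ ((ρ_ D).inv ≫ (D ◁ (c ≫ g ▷ V)) ≫ (α_ D Mo V).inv ≫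
      (ε_ Mo D ▷ V) ≫ (λ_ V).hom)) = c ≫ g ▷ V := by
  calc
    _ = 𝟙 _ ⊗≫ (η_ Mo D ▷ 𝟙_ C ≫ (Mo ⊗ D) ◁ c) ⊗≫ Mo ◁ (D ◁ (g ▷ V)) ⊗≫
          Mo ◁ (ε_ Mo D ▷ V) ⊗≫ 𝟙 _ := by
      monoidal
    _ = 𝟙 _ ⊗≫ (𝟙_ C ◁ c) ⊗≫ (η_ Mo D ▷ (U ⊗ V) ≫ (Mo ⊗ D) ◁ (g ▷ V)) ⊗≫
          Mo ◁ (ε_ Mo D ▷ V) ⊗≫ 𝟙 _ := by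
      rw [← whisker_exchange]; monoidal
    _ = 𝟙 _ ⊗≫ (𝟙_ C ◁ c) ⊗≫ (𝟙_ C ◁ (g ▷ V)) ⊗≫ (η_ Mo D ▷ Mo ⊗≫ Mo ◁ ε_ Mo D) ▷ V ⊗≫
          𝟙 _ := by
      rw [← whisker_exchange]; monoidal
    _ = _ := by
      rw [ExactPairing.evaluation_coevaluation'']; monoidal

private lemma snake' (M : RightMod A) :
    η_ M.X (M.Xᘁ) ≫ (M.X ◁ deltaDual M) =
      ((η_ M.X (M.Xᘁ) ≫
        (M.X ◁ ((λ_ (M.Xᘁ)).inv ≫ (η_ A.X (A.Xᘁ) ▷ M.Xᘁ) ≫ (α_ A.X (A.Xᘁ) (M.Xᘁ)).hom)) ≫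
        (α_ M.X A.X (A.Xᘁ ⊗ M.Xᘁ)).inv)) ≫ (M.act ▷ (A.Xᘁ ⊗ M.Xᘁ)) := by
  have h := gen' (Mo := M.X) (D := M.Xᘁ) ((η_ M.X (M.Xᘁ) ≫
        (M.X ◁ ((λ_ (M.Xᘁ)).inv ≫ (η_ A.X (A.Xᘁ) ▷ M.Xᘁ) ≫ (α_ A.X (A.Xᘁ) (M.Xᘁ)).hom)) ≫
        (α_ M.X A.X (A.Xᘁ ⊗ M.Xᘁ)).inv)) M.act
  dsimp only [deltaDual]
  simp only [MonoidalCategory.whiskerLeft_comp, Category.assoc] at h ⊢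
  exact h

private lemma KL (M : RightMod A) {X Z : C} (f : X ⊗ M.X ⟶ Z) :
    tensorRightHomEquiv X M.X (M.Xᘁ) (Z ⊗ A.Xᘁ)
      (tensorRightHomEquiv (X ⊗ M.X) A.X (A.Xᘁ) Z
        ((α_ X M.X A.X).hom ≫ (X ◁ M.act) ≫ f))
    = tensorRightHomEquiv X M.X (M.Xᘁ) Z f ≫ (Z ◁ deltaDual M) ≫ (α_ Z (A.Xᘁ) (M.Xᘁ)).inv := by
  dsimp only [tensorRightHomEquiv, Equiv.coe_fn_mk]
  calc
    _ = 𝟙 X ⊗≫ X ◁ (((η_ M.X (M.Xᘁ) ≫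
          (M.X ◁ ((λ_ (M.Xᘁ)).inv ≫ (η_ A.X (A.Xᘁ) ▷ M.Xᘁ) ≫ (α_ A.X (A.Xᘁ) (M.Xᘁ)).hom)) ≫
          (α_ M.X A.X (A.Xᘁ ⊗ M.Xᘁ)).inv)) ≫ (M.act ▷ (A.Xᘁ ⊗ M.Xᘁ))) ⊗≫
          f ▷ (A.Xᘁ ⊗ M.Xᘁ) ⊗≫ (α_ Z (A.Xᘁ) (M.Xᘁ)).inv := by
      monoidal
    _ = 𝟙 X ⊗≫ X ◁ (η_ M.X (M.Xᘁ) ≫ (M.X ◁ deltaDual M)) ⊗≫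
          f ▷ (A.Xᘁ ⊗ M.Xᘁ) ⊗≫ (α_ Z (A.Xᘁ) (M.Xᘁ)).inv := by
      rw [snake']
    _ = 𝟙 X ⊗≫ X ◁ η_ M.X (M.Xᘁ) ⊗≫
          ((X ⊗ M.X) ◁ deltaDual M ≫ f ▷ (A.Xᘁ ⊗ M.Xᘁ)) ⊗≫ (α_ Z (A.Xᘁ) (M.Xᘁ)).inv := by
      monoidal
    _ = 𝟙 X ⊗≫ X ◁ η_ M.X (M.Xᘁ) ⊗≫
          (f ▷ M.Xᘁ ≫ Z ◁ deltaDual M) ⊗≫ (α_ Z (A.Xᘁ) (M.Xᘁ)).inv := by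
      rw [whisker_exchange]
    _ = _ := by
      monoidal

omit [RigidCategory C] in
private lemma T_left {X X' Y Y' Z : C} [ExactPairing Y Y'] (t : X' ⟶ X) (f : X ⊗ Y ⟶ Z) :
    tensorRightHomEquiv X' Y Y' Z ((t ▷ Y) ≫ f) = t ≫ tensorRightHomEquiv X Y Y' Z f := by
  apply (tensorRightHomEquiv X' Y Y' Z).symm.injective
  rw [Equiv.symm_apply_apply, tensorRightHomEquiv_symm_naturality, Equiv.symm_apply_apply]

private lemma deltaAct_eq (N : RightMod A) :
    deltaAct N = tensorRightHomEquiv N.X A.X (A.Xᘁ) N.X N.act := rfl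

private lemma main_iff (M N : RightMod A) (X : C) (f : X ⊗ M.X ⟶ N.X) :
    IsModuleMorphismFrom X M N f ↔
      tensorRightHomEquiv X M.X (M.Xᘁ) N.X f ≫
          ((deltaAct N ▷ M.Xᘁ) ≫ (α_ N.X (A.Xᘁ) (M.Xᘁ)).hom) =
        tensorRightHomEquiv X M.X (M.Xᘁ) N.X f ≫ (N.X ◁ deltaDual M) := by
  have hL : tensorRightHomEquiv X M.X (M.Xᘁ) N.X f ≫ (deltaAct N ▷ M.Xᘁ) =
      tensorRightHomEquiv X M.X (M.Xᘁ) (N.X ⊗ A.Xᘁ)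
        (tensorRightHomEquiv (X ⊗ M.X) A.X (A.Xᘁ) N.X ((f ▷ A.X) ≫ N.act)) := by
    rw [← tensorRightHomEquiv_naturality, deltaAct_eq, T_left]
  constructor
  · intro h
    rw [← Category.assoc, hL, IsModuleMorphismFrom] at *
    rw [h, KL, Category.assoc, Category.assoc, Iso.inv_hom_id, Category.comp_id]
  · intro h
    have h' : tensorRightHomEquiv X M.X (M.Xᘁ) N.X f ≫ (deltaAct N ▷ M.Xᘁ) =
        tensorRightHomEquiv X M.X (M.Xᘁ) N.X f ≫ (N.X ◁ deltaDual M) ≫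
          (α_ N.X (A.Xᘁ) (M.Xᘁ)).inv := by
      rw [← Category.assoc, ← h]; simp
    rw [hL, ← KL] at h'
    have := (tensorRightHomEquiv (X ⊗ M.X) A.X (A.Xᘁ) N.X).injective
      ((tensorRightHomEquiv X M.X (M.Xᘁ) (N.X ⊗ A.Xᘁ)).injective h')
    exact this


/-- Internal-Hom property of the equalizer of `δ'_N ⊗ id` and `id ⊗ δ_M`:
a morphism `f : X ⊗ M ⟶ N` is a module morphism iff its adjunct `X ⟶ N ⊗ Mᘁ`
equalizes the pair, and consequently `Hom(X, E)` is in bijection, naturally in `X`,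
with the right `A`-module morphisms `X ⊗ M ⟶ N` (the bijection being implemented
by factoring the adjunct through `e`). -/
theorem module_hom_equalizer_bijection (M N : RightMod A)
    (E : C) (e : E ⟶ N.X ⊗ M.Xᘁ)
    (w : e ≫ ((deltaAct N ▷ M.Xᘁ) ≫ (α_ N.X (A.Xᘁ) (M.Xᘁ)).hom) =
      e ≫ (N.X ◁ deltaDual M))
    (hE : IsLimit (Fork.ofι e w)) :
    (∀ (X : C) (f : X ⊗ M.X ⟶ N.X),
      IsModuleMorphismFrom X M N f ↔
        tensorRightHomEquiv X M.X (M.Xᘁ) N.X f ≫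
            ((deltaAct N ▷ M.Xᘁ) ≫ (α_ N.X (A.Xᘁ) (M.Xᘁ)).hom) =
          tensorRightHomEquiv X M.X (M.Xᘁ) N.X f ≫ (N.X ◁ deltaDual M)) ∧
    ∃ Φ : ∀ X : C, (X ⟶ E) ≃ { f : X ⊗ M.X ⟶ N.X // IsModuleMorphismFrom X M N f },
      (∀ (X : C) (g : X ⟶ E),
        tensorRightHomEquiv X M.X (M.Xᘁ) N.X ((Φ X g).1) = g ≫ e) ∧
      (∀ (X X' : C) (t : X' ⟶ X) (g : X ⟶ E),
        ((Φ X' (t ≫ g)).1 : X' ⊗ M.X ⟶ N.X) = (t ▷ M.X) ≫ (Φ X g).1) := by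
  refine ⟨main_iff M N, ?_⟩
  have he : ∀ {X : C} (g₁ g₂ : X ⟶ E), g₁ ≫ e = g₂ ≫ e → g₁ = g₂ := by
    intro X g₁ g₂ h
    refine Fork.IsLimit.hom_ext hE ?_
    simpa using h
  have hmod : ∀ {X : C} (g : X ⟶ E),
      IsModuleMorphismFrom X M N ((tensorRightHomEquiv X M.X (M.Xᘁ) N.X).symm (g ≫ e)) := by
    intro X g
    rw [main_iff, Equiv.apply_symm_apply, Category.assoc, Category.assoc, w]
  have hlift : ∀ {X : C} (f : { f : X ⊗ M.X ⟶ N.X // IsModuleMorphismFrom X M N f }),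
      { l : X ⟶ E // l ≫ e = tensorRightHomEquiv X M.X (M.Xᘁ) N.X f.1 } := by
    intro X f
    obtain ⟨l, hl⟩ := Fork.IsLimit.lift' hE (tensorRightHomEquiv X M.X (M.Xᘁ) N.X f.1)
      (by simpa using (main_iff M N X f.1).1 f.2)
    exact ⟨l, by simpa using hl⟩
  refine ⟨fun X => ⟨
    fun g => ⟨(tensorRightHomEquiv X M.X (M.Xᘁ) N.X).symm (g ≫ e), hmod g⟩,
    fun f => (hlift f).1, ?_, ?_⟩, ?_, ?_⟩
  · intro g
    apply he
    rw [(hlift _).2, Equiv.apply_symm_apply]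
  · intro f
    apply Subtype.ext
    simp only
    rw [(hlift f).2, Equiv.symm_apply_apply]
  · intro X g
    exact (tensorRightHomEquiv X M.X (M.Xᘁ) N.X).apply_symm_apply (g ≫ e)
  · intro X X' t g
    simp only [Equiv.coe_fn_mk]
    rw [Category.assoc, tensorRightHomEquiv_symm_naturality]
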